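/- Let E be a finite-dimensional real vector space, C a nonzero cone of E, and u a linear endomorphism of E such that u(x) ≠ 0 for every x ∈ C with x ≠ 0. Then the image u(C) is a nonzero cone of E; in particular, u(C) is closed in E. -/
import Mathlib


/-- A *cone* in a real topological vector space: a closed subset containing `0`,
stable under addition and under multiplication by positive scalars. -/
def IsCone {E : Type*} [NormedAddCommGroup E] [NormedSpace ℝ E] (C : Set E) : Prop :=
  IsClosed C ∧ (0 : E) ∈ C ∧ (∀ x ∈ C, ∀ y ∈ C, x + y ∈ C) ∧
    ∀ t : ℝ, 0 < t → ∀ x ∈ C, t • x ∈ C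

/-- If `C` is a nonzero cone of a finite-dimensional real vector space and `u` is an
endomorphism that vanishes at no nonzero point of `C`, then `u(C)` is a nonzero cone
(in particular it is closed). -/
theorem image_cone {E : Type*} [NormedAddCommGroup E] [NormedSpace ℝ E]
    [FiniteDimensional ℝ E] (C : Set E) (hC : IsCone C)
    (hnonzero : ∃ x ∈ C, x ≠ 0) (u : E →ₗ[ℝ] E)
    (hu : ∀ x ∈ C, x ≠ 0 → u x ≠ 0) :
    IsCone (u '' C) ∧ ∃ y ∈ u '' C, y ≠ 0 := by
  obtain ⟨hclosed, h0, hadd, hsmul⟩ := hC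
  have ucont : Continuous u := u.continuous_of_finiteDimensional
  -- key bound
  obtain ⟨x₀, hx₀C, hx₀⟩ := hnonzero
  set S : Set E := C ∩ Metric.sphere 0 1 with hS
  have hScpt : IsCompact S := (isCompact_sphere (0:E) 1).inter_left hclosed
  have hSne : S.Nonempty := by
    refine ⟨‖x₀‖⁻¹ • x₀, hsmul _ (inv_pos.mpr (norm_pos_iff.mpr hx₀)) _ hx₀C, ?_⟩
    simp [norm_smul, abs_of_pos, inv_mul_cancel₀ (norm_ne_zero_iff.mpr hx₀)]
  obtain ⟨z, hzS, hzmin⟩ := hScpt.exists_isMinOn hSne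
    (continuous_norm.comp ucont).continuousOn (f := fun x => ‖u x‖)
  have hz1 : ‖z‖ = 1 := by simpa using hzS.2
  have hzne : z ≠ 0 := by intro h; simp [h] at hz1
  set c : ℝ := ‖u z‖ with hc
  have hcpos : 0 < c := norm_pos_iff.mpr (hu z hzS.1 hzne)
  have hbound : ∀ x ∈ C, c * ‖x‖ ≤ ‖u x‖ := by
    intro x hx
    rcases eq_or_ne x 0 with rfl | hxne
    · simp
    · have hn : (0:ℝ) < ‖x‖ := norm_pos_iff.mpr hxne
      have hmem : ‖x‖⁻¹ • x ∈ S := by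
        refine ⟨hsmul _ (by positivity) _ hx, ?_⟩
        simp [norm_smul, abs_of_pos, inv_mul_cancel₀ hn.ne']
      have h3 : ‖u z‖ ≤ ‖u (‖x‖⁻¹ • x)‖ := hzmin hmem
      simp only [map_smul, norm_smul, Real.norm_eq_abs, abs_of_pos (inv_pos.mpr hn)] at h3
      calc c * ‖x‖ ≤ (‖x‖⁻¹ * ‖u x‖) * ‖x‖ := by nlinarith
        _ = ‖u x‖ := by field_simp
  constructor
  · refine ⟨?_, ⟨0, h0, map_zero u⟩, ?_, ?_⟩
    · -- closedness via sequences
      apply IsSeqClosed.isClosed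
      intro y p hy hyp
      choose x hxC hux using hy
      have hbdd : ∃ R, ∀ n, ‖x n‖ ≤ R := by
        obtain ⟨R, hR⟩ := (Metric.isBounded_range_of_tendsto _ hyp).subset_closedBall 0
        refine ⟨c⁻¹ * R, fun n => ?_⟩
        have h1 : c * ‖x n‖ ≤ ‖u (x n)‖ := hbound _ (hxC n)
        have h2 : ‖y n‖ ≤ R := by simpa using hR ⟨n, rfl⟩
        rw [hux n] at h1
        rw [le_inv_mul_iff₀ hcpos]
        linarith
      obtain ⟨R, hR⟩ := hbdd
      have hcpt : IsCompact (C ∩ Metric.closedBall 0 R) :=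
        (isCompact_closedBall (0:E) R).inter_left hclosed
      have hmem : ∀ n, x n ∈ C ∩ Metric.closedBall 0 R := fun n =>
        ⟨hxC n, by simpa using hR n⟩
      obtain ⟨a, haM, φ, hφ, hlim⟩ := hcpt.tendsto_subseq hmem
      refine ⟨a, haM.1, ?_⟩
      have h1 : Filter.Tendsto (fun n => u (x (φ n))) Filter.atTop (nhds (u a)) :=
        (ucont.tendsto a).comp hlim
      have h2 : Filter.Tendsto (fun n => y (φ n)) Filter.atTop (nhds p) :=
        hyp.comp hφ.tendsto_atTop
      simp only [hux] at h1
      exact tendsto_nhds_unique h1 h2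
    · rintro _ ⟨a, ha, rfl⟩ _ ⟨b, hb, rfl⟩
      exact ⟨a + b, hadd a ha b hb, map_add u a b⟩
    · rintro t ht _ ⟨a, ha, rfl⟩
      exact ⟨t • a, hsmul t ht a ha, map_smul u t a⟩
  · exact ⟨u x₀, ⟨x₀, hx₀C, rfl⟩, hu x₀ hx₀C hx₀⟩
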